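/- Pigou-Dalton transfers produce Lorenz dominance: let v ∈ ℝ^d with v_i > v_j for some indices i ≠ j, and let 0 < ε < v_i − v_j. Define v' by v'_i = v_i − ε, v'_j = v_j + ε, and v'_k = v_k for all other k. Then v' Lorenz dominates v, and the total sums of v' and v are equal. -/

import Mathlib

/-- The vector `v` sorted in increasing order. -/
noncomputable def sortVec {d : ℕ} (v : Fin d → ℝ) : Fin d → ℝ := v ∘ Tuple.sort v

/-- The Lorenz vector of `v`: cumulative sums of the sorted vector. -/
noncomputable def lorenzVec {d : ℕ} (v : Fin d → ℝ) : Fin d → ℝ :=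
  fun k => ∑ i ∈ Finset.Iic k, sortVec v i

/-- Pareto dominance: componentwise at least, and not equal. -/
def ParetoDom {d : ℕ} (u w : Fin d → ℝ) : Prop :=
  (∀ j, w j ≤ u j) ∧ u ≠ w

/-- Lorenz dominance. -/
def LorenzDom {d : ℕ} (v v' : Fin d → ℝ) : Prop :=
  ParetoDom (lorenzVec v) (lorenzVec v')

/-- λ-Lorenz dominance. -/
def LambdaLorenzDom {d : ℕ} (l : ℝ) (v v' : Fin d → ℝ) : Prop :=
  ParetoDom (fun k => l * sortVec v k + (1 - l) * lorenzVec v k)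
            (fun k => l * sortVec v' k + (1 - l) * lorenzVec v' k)

lemma strictMono_val_le {n d : ℕ} (f : Fin n → Fin d) (hf : StrictMono f) (t : Fin n) :
    (t : ℕ) ≤ f t := by
  rcases n with _ | n
  · exact t.elim0
  induction t using Fin.induction with
  | zero => exact Nat.zero_le _
  | succ t ih =>
    have h1 : (f t.castSucc : ℕ) < f t.succ := hf (Fin.castSucc_lt_succ : t.castSucc < t.succ)
    have h2 : ((t.castSucc : Fin (n+1)) : ℕ) = t := rfl
    simp only [Fin.val_succ]
    omega

lemma sum_orderEmbOfFin' {d : ℕ} (s : Finset (Fin d)) {k : ℕ} (h : s.card = k) (w : Fin d → ℝ) :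
    ∑ m ∈ s, w m = ∑ t : Fin k, w (s.orderEmbOfFin h t) := by
  rw [← Finset.sum_image (f := w) (g := s.orderEmbOfFin h)
    (by intros a _ b _ hab; exact (s.orderEmbOfFin h).injective hab)]
  congr 1
  ext x
  simp only [Finset.mem_image, Finset.mem_univ, true_and]
  constructor
  · intro hx
    have h2 := Finset.range_orderEmbOfFin s h
    have : x ∈ Set.range ⇑(s.orderEmbOfFin h) := h2 ▸ hx
    exact this
  · rintro ⟨a, rfl⟩
    exact s.orderEmbOfFin_mem h a

lemma sum_Iic_eq_castLE {d : ℕ} (w : Fin d → ℝ) (k : Fin d) (hk : k.val + 1 ≤ d) :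
    ∑ i ∈ Finset.Iic k, w i = ∑ t : Fin (k.val + 1), w (Fin.castLE hk t) := by
  rw [← Finset.sum_image (f := w) (g := Fin.castLE hk)
    (by intros a _ b _ hab; exact Fin.castLE_injective hk hab)]
  congr 1
  ext x
  simp only [Finset.mem_image, Finset.mem_univ, true_and, Finset.mem_Iic]
  constructor
  · intro hx
    exact ⟨⟨x.val, by have := (Fin.le_def).1 hx; omega⟩, by ext; simp⟩
  · rintro ⟨a, rfl⟩
    rw [Fin.le_def]
    simpa using Nat.lt_succ_iff.mp a.isLt

/-- For a monotone `w`, the sum over `Iic k` is at most the sum over any set of size `k+1`. -/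
lemma sum_Iic_le_sum {d : ℕ} (w : Fin d → ℝ) (hw : Monotone w) (k : Fin d)
    (T : Finset (Fin d)) (hT : T.card = k.val + 1) :
    ∑ i ∈ Finset.Iic k, w i ≤ ∑ m ∈ T, w m := by
  have hk : k.val + 1 ≤ d := by
    have := T.card_le_univ
    simp only [hT, Finset.card_univ, Fintype.card_fin] at this
    exact this
  rw [sum_Iic_eq_castLE w k hk, sum_orderEmbOfFin' T hT w]
  apply Finset.sum_le_sum
  intro t _
  apply hw
  rw [Fin.le_def]
  simpa using strictMono_val_le _ (T.orderEmbOfFin hT).strictMono t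

/-- Lemma A: the Lorenz value at `k` is a lower bound for sums over sets of size `k+1`. -/
lemma lorenzVec_le_sum {d : ℕ} (v : Fin d → ℝ) (k : Fin d) (S : Finset (Fin d))
    (hS : S.card = k.val + 1) : lorenzVec v k ≤ ∑ m ∈ S, v m := by
  set σ := Tuple.sort v with hσ
  have hmono : Monotone (v ∘ σ) := Tuple.monotone_sort v
  set T := S.image σ.symm with hT
  have hTcard : T.card = k.val + 1 := by
    rw [hT, Finset.card_image_of_injective _ σ.symm.injective, hS]
  have hsum : ∑ m ∈ S, v m = ∑ t ∈ T, (v ∘ σ) t := by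
    rw [hT, Finset.sum_image (by intros a _ b _ hab; exact σ.symm.injective hab)]
    apply Finset.sum_congr rfl
    intro m _
    simp
  rw [hsum]
  exact sum_Iic_le_sum (v ∘ σ) hmono k T hTcard

/-- Lemma B: the Lorenz value at `k` is attained by some set of size `k+1`. -/
lemma lorenzVec_attained {d : ℕ} (v : Fin d → ℝ) (k : Fin d) :
    ∃ S : Finset (Fin d), S.card = k.val + 1 ∧ lorenzVec v k = ∑ m ∈ S, v m := by
  set σ := Tuple.sort v with hσ
  refine ⟨(Finset.Iic k).image σ, ?_, ?_⟩
  · rw [Finset.card_image_of_injective _ σ.injective, Fin.card_Iic]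
  · rw [Finset.sum_image (by intros a _ b _ hab; exact σ.injective hab)]
    rfl

/-- Lemma C: the set of all coordinates with value `≤ c` has minimal sum among sets
of the same size, strictly so for any other set. -/
lemma filter_le_sum_min {d : ℕ} (v : Fin d → ℝ) (c : ℝ) (S : Finset (Fin d))
    (hcard : S.card = (Finset.univ.filter (fun m => v m ≤ c)).card) :
    (∑ m ∈ Finset.univ.filter (fun m => v m ≤ c), v m ≤ ∑ m ∈ S, v m) ∧
    (S ≠ Finset.univ.filter (fun m => v m ≤ c) →
      ∑ m ∈ Finset.univ.filter (fun m => v m ≤ c), v m < ∑ m ∈ S, v m) := by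
  set T := Finset.univ.filter (fun m => v m ≤ c) with hTdef
  have hsplitT : ∑ m ∈ T ∩ S, v m + ∑ m ∈ T \ S, v m = ∑ m ∈ T, v m :=
    Finset.sum_inter_add_sum_sdiff T S v
  have hsplitS : ∑ m ∈ S ∩ T, v m + ∑ m ∈ S \ T, v m = ∑ m ∈ S, v m :=
    Finset.sum_inter_add_sum_sdiff S T v
  have hinter : T ∩ S = S ∩ T := Finset.inter_comm T S
  have hcards : (T \ S).card = (S \ T).card := by
    have h1 := Finset.card_inter_add_card_sdiff T S
    have h2 := Finset.card_inter_add_card_sdiff S T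
    rw [hinter] at h1
    omega
  have hTS_le : ∑ m ∈ T \ S, v m ≤ (T \ S).card • c := by
    apply Finset.sum_le_card_nsmul
    intro x hx
    have := (Finset.mem_sdiff.mp hx).1
    rw [hTdef, Finset.mem_filter] at this
    exact this.2
  have hST_ge : (S \ T).card • c ≤ ∑ m ∈ S \ T, v m := by
    apply Finset.card_nsmul_le_sum
    intro x hx
    have := (Finset.mem_sdiff.mp hx).2
    rw [hTdef, Finset.mem_filter] at this
    push_neg at this
    exact le_of_lt (this (Finset.mem_univ x))
  constructor
  · rw [← hsplitT, ← hsplitS, hinter]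
    have : ∑ m ∈ T \ S, v m ≤ ∑ m ∈ S \ T, v m := by
      calc ∑ m ∈ T \ S, v m ≤ (T \ S).card • c := hTS_le
        _ = (S \ T).card • c := by rw [hcards]
        _ ≤ ∑ m ∈ S \ T, v m := hST_ge
    linarith
  · intro hne
    have hSTne : (S \ T).Nonempty := by
      rw [← Finset.card_pos]
      by_contra h
      push_neg at h
      interval_cases hc : (S \ T).card
      · have hsub : S ⊆ T := by
          rw [← Finset.sdiff_eq_empty_iff_subset]
          exact Finset.card_eq_zero.mp hc
        exact hne (Finset.eq_of_subset_of_card_le hsub (le_of_eq hcard.symm))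
    have hST_gt : (S \ T).card • c < ∑ m ∈ S \ T, v m := by
      calc (S \ T).card • c = ∑ _m ∈ S \ T, c := by rw [Finset.sum_const]
        _ < ∑ m ∈ S \ T, v m := by
            apply Finset.sum_lt_sum_of_nonempty hSTne
            intro x hx
            have := (Finset.mem_sdiff.mp hx).2
            rw [hTdef, Finset.mem_filter] at this
            push_neg at this
            exact this (Finset.mem_univ x)
    rw [← hsplitT, ← hsplitS, hinter]
    have : ∑ m ∈ T \ S, v m < ∑ m ∈ S \ T, v m := by
      calc ∑ m ∈ T \ S, v m ≤ (T \ S).card • c := hTS_le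
        _ = (S \ T).card • c := by rw [hcards]
        _ < ∑ m ∈ S \ T, v m := hST_gt
    linarith

section main

variable {d : ℕ} (v v' : Fin d → ℝ) (i j : Fin d) (ε : ℝ)

lemma sum_neither (hvm : ∀ m, m ≠ i → m ≠ j → v' m = v m) (S : Finset (Fin d))
    (hi : i ∉ S) (hj : j ∉ S) : ∑ m ∈ S, v' m = ∑ m ∈ S, v m :=
  Finset.sum_congr rfl fun m hm => hvm m (fun h => hi (h ▸ hm)) (fun h => hj (h ▸ hm))

lemma sum_both (hij : i ≠ j) (hvi : v' i = v i - ε) (hvj : v' j = v j + ε)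
    (hvm : ∀ m, m ≠ i → m ≠ j → v' m = v m) (S : Finset (Fin d))
    (hi : i ∈ S) (hj : j ∈ S) : ∑ m ∈ S, v' m = ∑ m ∈ S, v m := by
  have hj' : j ∈ S.erase i := Finset.mem_erase.mpr ⟨Ne.symm hij, hj⟩
  have e1 : ∀ f : Fin d → ℝ, ∑ m ∈ S, f m
      = f i + (f j + ∑ m ∈ (S.erase i).erase j, f m) := by
    intro f
    rw [Finset.add_sum_erase _ f hj', Finset.add_sum_erase _ f hi]
  rw [e1 v', e1 v]
  have e2 : ∑ m ∈ (S.erase i).erase j, v' m = ∑ m ∈ (S.erase i).erase j, v m := by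
    apply Finset.sum_congr rfl
    intro m hm
    have h1 := Finset.mem_erase.mp hm
    have h2 := Finset.mem_erase.mp h1.2
    exact hvm m h2.1 h1.1
  rw [e2, hvi, hvj]
  ring

lemma sum_jonly (hvj : v' j = v j + ε)
    (hvm : ∀ m, m ≠ i → m ≠ j → v' m = v m) (S : Finset (Fin d))
    (hi : i ∉ S) (hj : j ∈ S) : ∑ m ∈ S, v' m = ∑ m ∈ S, v m + ε := by
  rw [← Finset.add_sum_erase _ v' hj, ← Finset.add_sum_erase _ v hj]
  have e2 : ∑ m ∈ S.erase j, v' m = ∑ m ∈ S.erase j, v m := by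
    apply Finset.sum_congr rfl
    intro m hm
    have h1 := Finset.mem_erase.mp hm
    exact hvm m (fun h => hi (h ▸ h1.2)) h1.1
  rw [e2, hvj]
  ring

lemma sum_ionly (hij : i ≠ j) (hvi : v' i = v i - ε) (hε' : v j < v i - ε)
    (hvm : ∀ m, m ≠ i → m ≠ j → v' m = v m) (S : Finset (Fin d))
    (hi : i ∈ S) (hj : j ∉ S) :
    (insert j (S.erase i)).card = S.card ∧
      ∑ m ∈ insert j (S.erase i), v m < ∑ m ∈ S, v' m := by
  have hjni : j ∉ S.erase i := fun h => hj (Finset.mem_of_mem_erase h)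
  constructor
  · rw [Finset.card_insert_of_notMem hjni, Finset.card_erase_of_mem hi]
    have : 1 ≤ S.card := Finset.card_pos.mpr ⟨i, hi⟩
    omega
  · rw [Finset.sum_insert hjni, ← Finset.add_sum_erase _ v' hi]
    have e2 : ∑ m ∈ S.erase i, v' m = ∑ m ∈ S.erase i, v m := by
      apply Finset.sum_congr rfl
      intro m hm
      have h1 := Finset.mem_erase.mp hm
      exact hvm m h1.1 (fun h => hj (h ▸ h1.2))
    rw [e2, hvi]
    linarith

end main

theorem pigou_dalton {d : ℕ} (v : Fin d → ℝ) (i j : Fin d) (hij : i ≠ j)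
    (hvij : v j < v i) (ε : ℝ) (hε : 0 < ε) (hε' : ε < v i - v j)
    (v' : Fin d → ℝ)
    (hv' : v' = Function.update (Function.update v i (v i - ε)) j (v j + ε)) :
    LorenzDom v' v ∧ ∑ k, v' k = ∑ k, v k := by
  have hvi : v' i = v i - ε := by
    rw [hv', Function.update_of_ne hij, Function.update_self]
  have hvj : v' j = v j + ε := by
    rw [hv', Function.update_self]
  have hvm : ∀ m, m ≠ i → m ≠ j → v' m = v m := by
    intro m hmi hmj
    rw [hv', Function.update_of_ne hmj, Function.update_of_ne hmi]
  have hεij : v j < v i - ε := by linarith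
  -- sum equality
  have hsum : ∑ k, v' k = ∑ k, v k :=
    sum_both v v' i j ε hij hvi hvj hvm Finset.univ (Finset.mem_univ i) (Finset.mem_univ j)
  -- the `≤` part
  have hle : ∀ k, lorenzVec v k ≤ lorenzVec v' k := by
    intro k
    obtain ⟨S, hScard, hSeq⟩ := lorenzVec_attained v' k
    rw [hSeq]
    by_cases hi : i ∈ S <;> by_cases hj : j ∈ S
    · rw [sum_both v v' i j ε hij hvi hvj hvm S hi hj]
      exact lorenzVec_le_sum v k S hScard
    · obtain ⟨hcard', hlt⟩ := sum_ionly v v' i j ε hij hvi hεij hvm S hi hj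
      calc lorenzVec v k ≤ ∑ m ∈ insert j (S.erase i), v m :=
            lorenzVec_le_sum v k _ (by rw [hcard', hScard])
        _ ≤ ∑ m ∈ S, v' m := le_of_lt hlt
    · rw [sum_jonly v v' i j ε hvj hvm S hi hj]
      have := lorenzVec_le_sum v k S hScard
      linarith
    · rw [sum_neither v v' i j hvm S hi hj]
      exact lorenzVec_le_sum v k S hScard
  -- the strict part at a specific k
  set T := Finset.univ.filter (fun m => v m ≤ v j) with hTdef
  have hjT : j ∈ T := by simp [hTdef]
  have hiT : i ∉ T := by simp [hTdef]; linarith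
  have hT1 : 1 ≤ T.card := Finset.card_pos.mpr ⟨j, hjT⟩
  have hTd : T.card ≤ d := by
    have := T.card_le_univ
    simpa using this
  set k : Fin d := ⟨T.card - 1, by omega⟩ with hkdef
  have hk1 : k.val + 1 = T.card := by simp [hkdef]; omega
  have hstrict : lorenzVec v k < lorenzVec v' k := by
    obtain ⟨S, hScard, hSeq⟩ := lorenzVec_attained v' k
    have hSTcard : S.card = T.card := by omega
    have hTle : lorenzVec v k ≤ ∑ m ∈ T, v m :=
      lorenzVec_le_sum v k T (by omega)
    rw [hSeq]
    have hScard2 : S.card = (Finset.univ.filter (fun m => v m ≤ v j)).card := by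
      rw [← hTdef]; exact hSTcard
    have hiT' : i ∉ Finset.univ.filter (fun m => v m ≤ v j) := by rw [← hTdef]; exact hiT
    have hjT' : j ∈ Finset.univ.filter (fun m => v m ≤ v j) := by rw [← hTdef]; exact hjT
    have key : ∑ m ∈ T, v m < ∑ m ∈ S, v' m := by
      rw [hTdef]
      by_cases hi : i ∈ S <;> by_cases hj : j ∈ S
      · rw [sum_both v v' i j ε hij hvi hvj hvm S hi hj]
        exact (filter_le_sum_min v (v j) S hScard2).2 (fun h => hiT' (h ▸ hi))
      · obtain ⟨hcard', hlt⟩ := sum_ionly v v' i j ε hij hvi hεij hvm S hi hj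
        calc ∑ m ∈ Finset.univ.filter (fun m => v m ≤ v j), v m
            ≤ ∑ m ∈ insert j (S.erase i), v m :=
              (filter_le_sum_min v (v j) _ (by rw [hcard', hScard2])).1
          _ < ∑ m ∈ S, v' m := hlt
      · rw [sum_jonly v v' i j ε hvj hvm S hi hj]
        have := (filter_le_sum_min v (v j) S hScard2).1
        linarith
      · rw [sum_neither v v' i j hvm S hi hj]
        exact (filter_le_sum_min v (v j) S hScard2).2 (fun h => hj (h ▸ hjT'))
    linarith
  refine ⟨⟨hle, ?_⟩, hsum⟩
  intro h
  have := congrFun h k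
  rw [this] at hstrict
  exact lt_irrefl _ hstrict
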